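/- Let C be a Hom-finite, Krull–Schmidt, k-linear triangulated category, (X,Y) a torsion pair in C with core I, and D a subcategory satisfying condition (RF) with D ⊆ X ⊆ (D[-1])⊥. Let (X',Y') = (μ⁻¹(X;D), μ⁻¹(Y;D[1])) with core I'. If I = D, then I' = I, X' ⊆ X and Y ⊆ Y'. -/

import Mathlib

open CategoryTheory CategoryTheory.Limits CategoryTheory.Pretriangulated

variable {C : Type*} [Category C] [Preadditive C] [HasZeroObject C]
  [HasShift C ℤ] [∀ n : ℤ, (shiftFunctor C n).Additive] [Pretriangulated C]

/-- `Hom(𝒳, 𝒴) = 0`. -/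
def homZero (𝒳 𝒴 : Set C) : Prop :=
  ∀ ⦃A B : C⦄, A ∈ 𝒳 → B ∈ 𝒴 → ∀ f : A ⟶ B, f = 0

/-- The shift `𝒳[n]` of a subcategory (closed under isomorphisms). -/
def shiftSet (𝒳 : Set C) (n : ℤ) : Set C :=
  {Z | ∃ A ∈ 𝒳, Nonempty ((A⟦n⟧) ≅ Z)}

/-- The class `𝒳 * 𝒴` of extensions. -/
def extClass (𝒳 𝒴 : Set C) : Set C :=
  {Z | ∃ (A B : C) (f : A ⟶ Z) (g : Z ⟶ B) (h : B ⟶ A⟦(1:ℤ)⟧),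
      A ∈ 𝒳 ∧ B ∈ 𝒴 ∧ Triangle.mk f g h ∈ distTriang C}

/-- A torsion pair: `Hom(𝒳,𝒴) = 0` and `C = 𝒳 * 𝒴`. -/
def IsTorsionPair (𝒳 𝒴 : Set C) : Prop :=
  homZero 𝒳 𝒴 ∧ ∀ Z : C, Z ∈ extClass 𝒳 𝒴

/-- A cotorsion pair: `Hom(𝒳,𝒲[1]) = 0` and `C = 𝒳 * 𝒲[1]`. -/
def IsCotorsionPair (𝒳 𝒲 : Set C) : Prop :=
  IsTorsionPair 𝒳 (shiftSet 𝒲 (1:ℤ))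

/-- Full subcategory closed under isomorphisms, finite direct sums and direct summands. -/
structure IsSubcat (𝒳 : Set C) : Prop where
  mem_of_iso : ∀ ⦃A B : C⦄, (A ≅ B) → A ∈ 𝒳 → B ∈ 𝒳
  biprod_mem : ∀ ⦃A B : C⦄, A ∈ 𝒳 → B ∈ 𝒳 → (A ⊞ B) ∈ 𝒳
  mem_of_biprod : ∀ ⦃A B : C⦄, (A ⊞ B) ∈ 𝒳 → A ∈ 𝒳 ∧ B ∈ 𝒳

/-- `⊥(𝒟[1]) = {M : Hom(M, 𝒟[1]) = 0}`. -/
def leftPerpShift (𝒟 : Set C) : Set C :=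
  {M : C | ∀ D ∈ 𝒟, ∀ f : M ⟶ (D⟦(1:ℤ)⟧), f = 0}

/-- `(𝒟[-1])⊥ = {M : Hom(𝒟[-1], M) = 0}`. -/
def shiftRightPerp (𝒟 : Set C) : Set C :=
  {M : C | ∀ D ∈ 𝒟, ∀ f : (D⟦(-1:ℤ)⟧) ⟶ M, f = 0}

/-- `A` admits a left `𝒟`-approximation. -/
def HasLeftApprox (𝒟 : Set C) (A : C) : Prop :=
  ∃ D ∈ 𝒟, ∃ f : A ⟶ D, ∀ D' ∈ 𝒟, ∀ g : A ⟶ D', ∃ h : D ⟶ D', f ≫ h = g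

/-- `A` admits a right `𝒟`-approximation. -/
def HasRightApprox (𝒟 : Set C) (A : C) : Prop :=
  ∃ D ∈ 𝒟, ∃ f : D ⟶ A, ∀ D' ∈ 𝒟, ∀ g : D' ⟶ A, ∃ h : D' ⟶ D, h ≫ f = g

/-- `μ⁻¹(ℳ;𝒟) = (𝒟 * ℳ[1]) ∩ ⊥(𝒟[1])`. -/
def muInv (ℳ 𝒟 : Set C) : Set C :=
  extClass 𝒟 (shiftSet ℳ (1:ℤ)) ∩ leftPerpShift 𝒟

/-- `μ(𝒩;𝒟) = (𝒩[-1] * 𝒟) ∩ (𝒟[-1])⊥`. -/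
def mu (𝒩 𝒟 : Set C) : Set C :=
  extClass (shiftSet 𝒩 (-1:ℤ)) 𝒟 ∩ shiftRightPerp 𝒟

/-- `(ℳ,𝒩)` is a `𝒟`-mutation pair. -/
def IsMutationPair (ℳ 𝒩 𝒟 : Set C) : Prop :=
  ℳ = mu 𝒩 𝒟 ∧ 𝒩 = muInv ℳ 𝒟

/-- Condition (RF): `𝒟` is functorially finite, rigid and `⊥(𝒟[1]) = (𝒟[-1])⊥`. -/
def RF (𝒟 : Set C) : Prop :=
  (∀ A : C, HasLeftApprox 𝒟 A) ∧ (∀ A : C, HasRightApprox 𝒟 A) ∧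
    homZero 𝒟 (shiftSet 𝒟 (1:ℤ)) ∧ leftPerpShift 𝒟 = shiftRightPerp 𝒟

/-- The Ext-injective objects of `𝒳`. -/
def extInj (𝒳 : Set C) : Set C :=
  {T : C | T ∈ 𝒳 ∧ ∀ A ∈ 𝒳, ∀ f : A ⟶ (T⟦(1:ℤ)⟧), f = 0}

/-- The Ext-projective objects of `𝒴`. -/
def extProj (𝒴 : Set C) : Set C :=
  {T : C | T ∈ 𝒴 ∧ ∀ B ∈ 𝒴, ∀ f : T ⟶ (B⟦(1:ℤ)⟧), f = 0}


section AuxLemmas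

omit [HasZeroObject C] [Pretriangulated C] in
lemma aux_shift_map_zero {A B : C} (n : ℤ) (f : A ⟶ B)
    (h : (shiftFunctor C n).map f = 0) : f = 0 :=
  (shiftFunctor C n).map_injective (by simpa using h)

omit [HasZeroObject C] [Pretriangulated C] in
lemma aux_shift_hom_zero {A B : C} (n : ℤ) (h : ∀ g : A ⟶ B, g = 0)
    (f : A⟦n⟧ ⟶ B⟦n⟧) : f = 0 := by
  have h2 := h ((shiftFunctor C n).preimage f)
  rw [← (shiftFunctor C n).map_preimage f, h2, Functor.map_zero]

lemma aux_retract_mem {𝒮 : Set C} (h𝒮 : IsSubcat 𝒮) [IsIdempotentComplete C]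
    {M B : C} (hB : B ∈ 𝒮) (β : M ⟶ B) (r : B ⟶ M) (hβr : β ≫ r = 𝟙 M) : M ∈ 𝒮 := by
  obtain ⟨K, i, p, hip, hpi⟩ := IsIdempotentComplete.idempotents_split B (𝟙 B - r ≫ β)
    (by simp [Preadditive.comp_sub, Preadditive.sub_comp, reassoc_of% hβr])
  have hβp : β ≫ p = 0 := by
    have h0 := congrArg (fun x : B ⟶ B => β ≫ x ≫ p) hpi
    simpa [Preadditive.comp_sub, Preadditive.sub_comp, hip, reassoc_of% hβr,
      reassoc_of% hip, sub_self] using h0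
  have hir : i ≫ r = 0 := by
    have h0 := congrArg (fun x : B ⟶ B => i ≫ x ≫ r) hpi
    simpa [Preadditive.comp_sub, Preadditive.sub_comp, hβr, reassoc_of% hβr,
      reassoc_of% hip, sub_self] using h0
  have hiso : B ≅ M ⊞ K := by
    refine ⟨biprod.lift r p, biprod.desc β i, ?_, ?_⟩
    · rw [biprod.lift_desc, hpi]; abel
    · apply biprod.hom_ext' <;> apply biprod.hom_ext <;>
        simp [hβr, hβp, hir, hip]
  exact (h𝒮.mem_of_biprod (h𝒮.mem_of_iso hiso hB)).1

lemma aux_zero_mem {𝒮 : Set C} (h𝒮 : IsSubcat 𝒮) [IsIdempotentComplete C]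
    {A : C} (hA : A ∈ 𝒮) {Z : C} (hZ : IsZero Z) : Z ∈ 𝒮 :=
  aux_retract_mem h𝒮 hA (0 : Z ⟶ A) 0 (by rw [zero_comp]; exact (hZ.eq_of_src _ _).symm)

lemma aux_mem_right_of_perp {𝒳 𝒴 : Set C} [IsIdempotentComplete C] (hY : IsSubcat 𝒴)
    (hpair : IsTorsionPair 𝒳 𝒴) {N : C}
    (h : ∀ A ∈ 𝒳, ∀ f : A ⟶ N, f = 0) : N ∈ 𝒴 := by
  obtain ⟨A, B, α, β, γ, hA, hB, hT⟩ := hpair.2 N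
  obtain ⟨r, hr⟩ := Pretriangulated.Triangle.yoneda_exact₂ _ hT (𝟙 N)
    (by rw [h A hA α]; exact zero_comp)
  exact aux_retract_mem hY hB β r hr.symm

lemma aux_mem_left_of_perp {𝒳 𝒴 : Set C} [IsIdempotentComplete C] (hX : IsSubcat 𝒳)
    (hpair : IsTorsionPair 𝒳 𝒴) {N : C}
    (h : ∀ B ∈ 𝒴, ∀ f : N ⟶ B, f = 0) : N ∈ 𝒳 := by
  obtain ⟨A, B, α, β, γ, hA, hB, hT⟩ := hpair.2 N
  obtain ⟨s, hs⟩ := Pretriangulated.Triangle.coyoneda_exact₂ _ hT (𝟙 N)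
    (by rw [h B hB β]; exact comp_zero)
  exact aux_retract_mem hX hA s α hs.symm

lemma aux_middle_iso (T : Triangle C) (hT : T ∈ distTriang C) {Z : C} (i : T.obj₂ ≅ Z) :
    Triangle.mk (T.mor₁ ≫ i.hom) (i.inv ≫ T.mor₂) T.mor₃ ∈ distTriang C := by
  refine isomorphic_distinguished _ hT _ ?_
  exact Triangle.isoMk _ _ (Iso.refl _) i.symm (Iso.refl _)
    (by show (T.mor₁ ≫ i.hom) ≫ i.inv = 𝟙 T.obj₁ ≫ T.mor₁; simp)
    (by show (i.inv ≫ T.mor₂) ≫ 𝟙 T.obj₃ = i.inv ≫ T.mor₂; simp)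
    (by show T.mor₃ ≫ (𝟙 T.obj₁)⟦(1:ℤ)⟧' = 𝟙 T.obj₃ ≫ T.mor₃; simp)

lemma aux_contractible_mk [IsIdempotentComplete C] (M O : C) (hO : IsZero O) :
    Triangle.mk (𝟙 M) (0 : M ⟶ O) (0 : O ⟶ M⟦(1:ℤ)⟧) ∈ distTriang C := by
  refine isomorphic_distinguished _ (contractible_distinguished M) _ ?_
  exact Triangle.isoMk _ _ (Iso.refl _) (Iso.refl _) (hO.iso (isZero_zero C))
    (by show 𝟙 M ≫ 𝟙 M = 𝟙 M ≫ 𝟙 M; rfl)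
    (by show (0 : M ⟶ O) ≫ (hO.iso (isZero_zero C)).hom = 𝟙 M ≫ 0; simp)
    (by show (0 : O ⟶ M⟦(1:ℤ)⟧) ≫ (𝟙 M)⟦(1:ℤ)⟧' = (hO.iso (isZero_zero C)).hom ≫ 0; simp)

end AuxLemmas

/-- if the core `I` of the torsion pair `(𝒳,𝒴)` equals `𝒟`, then the
mutated core `I'` equals `I`, `𝒳' ⊆ 𝒳` and `𝒴 ⊆ 𝒴'`. -/
theorem stmt16 (k : Type*) [Field k] [Linear k C]
    [∀ A B : C, Module.Finite k (A ⟶ B)] [IsIdempotentComplete C]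
    (𝒳 𝒴 𝒟 : Set C) (hX : IsSubcat 𝒳) (hY : IsSubcat 𝒴) (hD : IsSubcat 𝒟)
    (hpair : IsTorsionPair 𝒳 𝒴)
    (hRF : RF 𝒟)
    (hDX : 𝒟 ⊆ 𝒳) (hXD : 𝒳 ⊆ shiftRightPerp 𝒟)
    (hID : 𝒳 ∩ shiftSet 𝒴 (-1:ℤ) = 𝒟) :
    muInv 𝒳 𝒟 ∩ shiftSet (muInv 𝒴 (shiftSet 𝒟 (1:ℤ))) (-1:ℤ) =
      𝒳 ∩ shiftSet 𝒴 (-1:ℤ) ∧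
    muInv 𝒳 𝒟 ⊆ 𝒳 ∧
    𝒴 ⊆ muInv 𝒴 (shiftSet 𝒟 (1:ℤ)) := by
  obtain ⟨hhom, hdecomp⟩ := hpair
  have hrigid := hRF.2.2.1
  have hperpEq := hRF.2.2.2
  -- X ⊆ ⊥(D[1])
  have hXperp : ∀ A ∈ 𝒳, ∀ D' ∈ 𝒟, ∀ f : A ⟶ D'⟦(1:ℤ)⟧, f = 0 := by
    intro A hA D' hD' f
    have hA' : A ∈ leftPerpShift 𝒟 := by rw [hperpEq]; exact hXD hA
    exact hA' D' hD' f
  -- zero objects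
  obtain ⟨O, hO⟩ := HasZeroObject.zero (C := C)
  obtain ⟨A₀, B₀, _, _, _, hA₀, hB₀, _⟩ := hdecomp O
  have h0X : O ∈ 𝒳 := aux_zero_mem hX hA₀ hO
  have h0Y : O ∈ 𝒴 := aux_zero_mem hY hB₀ hO
  -- L6
  have hL6 : ∀ B ∈ 𝒴, ∃ (X₁ Y₀ : C) (α : X₁ ⟶ B⟦(-1:ℤ)⟧) (β : B⟦(-1:ℤ)⟧ ⟶ Y₀)
      (γ : Y₀ ⟶ X₁⟦(1:ℤ)⟧),
      X₁ ∈ 𝒟 ∧ Y₀ ∈ 𝒴 ∧ Triangle.mk α β γ ∈ distTriang C := by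
    intro B hB
    obtain ⟨X₁, Y₀, α, β, γ, hX₁, hY₀, hT⟩ := hdecomp (B⟦(-1:ℤ)⟧)
    refine ⟨X₁, Y₀, α, β, γ, ?_, hY₀, hT⟩
    rw [← hID]
    refine ⟨hX₁, ⟨X₁⟦(1:ℤ)⟧, ?_, ⟨shiftShiftNeg X₁ 1⟩⟩⟩
    refine aux_mem_right_of_perp hY ⟨hhom, hdecomp⟩ ?_
    intro A hA g
    have hrot := rot_of_distTriang _ (rot_of_distTriang _ hT)
    have hg1 : g ≫ α⟦(1:ℤ)⟧' = 0 := by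
      have h1 : (g ≫ α⟦(1:ℤ)⟧') ≫ (shiftNegShift B (1:ℤ)).hom = 0 := hhom hA hB _
      rw [← cancel_mono (shiftNegShift B (1:ℤ)).hom, zero_comp]
      exact h1
    have hg2 : g ≫ ((Triangle.mk α β γ).rotate.rotate).mor₂ = 0 := by
      show g ≫ (-(α⟦(1:ℤ)⟧')) = 0
      rw [Preadditive.comp_neg, hg1, neg_zero]
    obtain ⟨h, hh⟩ := Pretriangulated.Triangle.coyoneda_exact₂ _ hrot g hg2
    rw [hh, hhom hA hY₀ h]; exact zero_comp
  -- L7 : every B ∈ 𝒴 lies in D[1] * Y[1]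
  have hL7 : ∀ B ∈ 𝒴, B ∈ extClass (shiftSet 𝒟 (1:ℤ)) (shiftSet 𝒴 (1:ℤ)) := by
    intro B hB
    obtain ⟨X₁, Y₀, α, β, γ, hX₁, hY₀, hT⟩ := hL6 B hB
    have hT3 := rot_of_distTriang _ (rot_of_distTriang _ (rot_of_distTriang _ hT))
    exact ⟨X₁⟦(1:ℤ)⟧, Y₀⟦(1:ℤ)⟧,
      ((Triangle.mk α β γ).rotate.rotate.rotate).mor₁ ≫ (shiftNegShift B (1:ℤ)).hom,
      (shiftNegShift B (1:ℤ)).inv ≫ ((Triangle.mk α β γ).rotate.rotate.rotate).mor₂,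
      ((Triangle.mk α β γ).rotate.rotate.rotate).mor₃,
      ⟨X₁, hX₁, ⟨Iso.refl _⟩⟩, ⟨Y₀, hY₀, ⟨Iso.refl _⟩⟩,
      aux_middle_iso _ hT3 (shiftNegShift B (1:ℤ))⟩
  -- B ∈ ⊥(D[1][1]) for B ∈ 𝒴
  have hYperpD1 : ∀ B ∈ 𝒴, B ∈ leftPerpShift (shiftSet 𝒟 (1:ℤ)) := by
    intro B hB E hE f
    obtain ⟨D', hD', ⟨eD⟩⟩ := hE
    have hBm : B⟦(-1:ℤ)⟧ ∈ leftPerpShift 𝒟 := by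
      rw [hperpEq]
      intro D'' hD'' g
      have h2 : (shiftFunctor C (-1:ℤ)).preimage g = 0 := hhom (hDX hD'') hB _
      rw [← (shiftFunctor C (-1:ℤ)).map_preimage g, h2, Functor.map_zero]
    have h1 : (f ≫ eD.inv⟦(1:ℤ)⟧')⟦(-1:ℤ)⟧' ≫ (shiftShiftNeg (D'⟦(1:ℤ)⟧) 1).hom = 0 :=
      hBm D' hD' _
    have h2 : (f ≫ eD.inv⟦(1:ℤ)⟧')⟦(-1:ℤ)⟧' = 0 := by
      rw [← cancel_mono (shiftShiftNeg (D'⟦(1:ℤ)⟧) 1).hom, zero_comp]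
      exact h1
    have h3 : f ≫ eD.inv⟦(1:ℤ)⟧' = 0 := aux_shift_map_zero _ _ h2
    have h4 : f = (f ≫ eD.inv⟦(1:ℤ)⟧') ≫ eD.hom⟦(1:ℤ)⟧' := by
      rw [Category.assoc, ← Functor.map_comp, eD.inv_hom_id, CategoryTheory.Functor.map_id, Category.comp_id]
    rw [h4, h3, zero_comp]
  have part3 : 𝒴 ⊆ muInv 𝒴 (shiftSet 𝒟 (1:ℤ)) := fun B hB => ⟨hL7 B hB, hYperpD1 B hB⟩
  -- part 2
  have part2 : muInv 𝒳 𝒟 ⊆ 𝒳 := by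
    intro M hM
    obtain ⟨⟨D₀, XX, a, p, δ, hD₀, hXX, hT1⟩, hMperp⟩ := hM
    obtain ⟨X₀, hX₀, ⟨eX⟩⟩ := hXX
    refine aux_mem_left_of_perp hX ⟨hhom, hdecomp⟩ ?_
    intro B hB f
    obtain ⟨g, hg⟩ := Pretriangulated.Triangle.yoneda_exact₂ _ hT1 f
      (by exact hhom (hDX hD₀) hB _)
    obtain ⟨P, Q, u, v, w, hP, hQ, hT3⟩ := hL7 B hB
    obtain ⟨D₁, hD₁, ⟨eP⟩⟩ := hP
    obtain ⟨Y₁, hY₁, ⟨eQ⟩⟩ := hQ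
    have hgv : g ≫ v = 0 := by
      have h0 : eX.hom ≫ (g ≫ v) ≫ eQ.inv = 0 := by
        have := aux_shift_hom_zero (1:ℤ) (hhom hX₀ hY₁) (eX.hom ≫ (g ≫ v) ≫ eQ.inv)
        exact this
      have h1 : (g ≫ v) ≫ eQ.inv = 0 := by
        exact (cancel_epi eX.hom).1 (h0.trans comp_zero.symm)
      rw [← cancel_mono eQ.inv, zero_comp]; exact h1
    obtain ⟨h, hh⟩ := Pretriangulated.Triangle.coyoneda_exact₂ _ hT3 g (by exact hgv)
    have hh' : g = h ≫ u := hh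
    have hg' : f = p ≫ g := hg
    have hph : (p ≫ h) ≫ eP.inv = 0 := hMperp D₁ hD₁ _
    have hph0 : p ≫ h = 0 := by
      exact (cancel_mono eP.inv).1 (hph.trans zero_comp.symm)
    rw [hg', hh']
    exact ((Category.assoc p h u).symm.trans (congrArg (· ≫ u) hph0)).trans zero_comp
  -- inclusion ⊇ of the core equality
  have h0X1 : O ∈ shiftSet 𝒳 (1:ℤ) :=
    ⟨O, h0X, ⟨IsZero.iso ((shiftFunctor C (1:ℤ)).map_isZero hO) hO⟩⟩
  have h0Y1 : O ∈ shiftSet 𝒴 (1:ℤ) :=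
    ⟨O, h0Y, ⟨IsZero.iso ((shiftFunctor C (1:ℤ)).map_isZero hO) hO⟩⟩
  have hsub1 : 𝒳 ∩ shiftSet 𝒴 (-1:ℤ) ⊆
      muInv 𝒳 𝒟 ∩ shiftSet (muInv 𝒴 (shiftSet 𝒟 (1:ℤ))) (-1:ℤ) := by
    intro M hM
    have hMD : M ∈ 𝒟 := hID ▸ hM
    constructor
    · constructor
      · exact ⟨M, O, 𝟙 M, 0, 0, hMD, h0X1, aux_contractible_mk M O hO⟩
      · intro D' hD' f
        exact hrigid hMD ⟨D', hD', ⟨Iso.refl _⟩⟩ f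
    · refine ⟨M⟦(1:ℤ)⟧, ⟨?_, ?_⟩, ⟨shiftShiftNeg M 1⟩⟩
      · exact ⟨M⟦(1:ℤ)⟧, O, 𝟙 _, 0, 0, ⟨M, hMD, ⟨Iso.refl _⟩⟩, h0Y1,
          aux_contractible_mk _ O hO⟩
      · intro E hE f
        obtain ⟨D', hD', ⟨eD⟩⟩ := hE
        have h2 : f ≫ eD.inv⟦(1:ℤ)⟧' = 0 :=
          aux_shift_hom_zero (1:ℤ) (fun q => hrigid hMD ⟨D', hD', ⟨Iso.refl _⟩⟩ q) _
        have h4 : f = (f ≫ eD.inv⟦(1:ℤ)⟧') ≫ eD.hom⟦(1:ℤ)⟧' := by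
          rw [Category.assoc, ← Functor.map_comp, eD.inv_hom_id, CategoryTheory.Functor.map_id,
            Category.comp_id]
        rw [h4, h2, zero_comp]
  -- inclusion ⊆ of the core equality
  have hsub2 : muInv 𝒳 𝒟 ∩ shiftSet (muInv 𝒴 (shiftSet 𝒟 (1:ℤ))) (-1:ℤ) ⊆
      𝒳 ∩ shiftSet 𝒴 (-1:ℤ) := by
    intro M hM
    obtain ⟨hMX', hMY'⟩ := hM
    have hMX : M ∈ 𝒳 := part2 hMX'
    obtain ⟨N, hN, ⟨e⟩⟩ := hMY'
    obtain ⟨⟨E, F, aN, bN, cN, hE, hF, hTN⟩, hNperp⟩ := hN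
    obtain ⟨D₁, hD₁, ⟨eE⟩⟩ := hE
    obtain ⟨Y₁, hY₁, ⟨eF⟩⟩ := hF
    have hb : bN = 0 := by
      have h0 : e.inv ≫ bN⟦(-1:ℤ)⟧' ≫ eF.inv⟦(-1:ℤ)⟧' ≫ (shiftShiftNeg Y₁ 1).hom = 0 :=
        hhom hMX hY₁ _
      have h1 : bN⟦(-1:ℤ)⟧' ≫ eF.inv⟦(-1:ℤ)⟧' ≫ (shiftShiftNeg Y₁ 1).hom = 0 := by
        rw [← cancel_epi e.inv, comp_zero]; exact h0
      have h2 : bN⟦(-1:ℤ)⟧' = 0 := by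
        rw [← cancel_mono (eF.inv⟦(-1:ℤ)⟧' ≫ (shiftShiftNeg Y₁ 1).hom), zero_comp]
        exact h1
      exact aux_shift_map_zero _ _ h2
    obtain ⟨s, hs0⟩ := Pretriangulated.Triangle.coyoneda_exact₂ _ hTN (𝟙 N)
      (by show 𝟙 N ≫ bN = 0; simp [hb])
    have hs : 𝟙 N = s ≫ aN := hs0
    have hMY : M⟦(1:ℤ)⟧ ∈ 𝒴 := by
      refine aux_mem_right_of_perp hY ⟨hhom, hdecomp⟩ ?_
      intro A hA f
      have j : M⟦(1:ℤ)⟧ ≅ N := ((shiftFunctor C (1:ℤ)).mapIso e.symm) ≪≫ shiftNegShift N 1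
      have h1 : ((f ≫ j.hom) ≫ s) ≫ eE.inv = 0 := hXperp A hA D₁ hD₁ _
      have h2 : (f ≫ j.hom) ≫ s = 0 := by
        exact (cancel_mono eE.inv).1 (h1.trans zero_comp.symm)
      have h3 : f ≫ j.hom = 0 := by
        calc f ≫ j.hom = (f ≫ j.hom) ≫ 𝟙 N := (Category.comp_id _).symm
        _ = ((f ≫ j.hom) ≫ s) ≫ aN := by rw [hs]; exact (Category.assoc _ _ _).symm
        _ = 0 := by rw [h2]; exact zero_comp
      have h4 : f = (f ≫ j.hom) ≫ j.inv := by
        rw [Category.assoc, j.hom_inv_id, Category.comp_id]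
      rw [h4, h3, zero_comp]
    exact ⟨hMX, ⟨M⟦(1:ℤ)⟧, hMY, ⟨shiftShiftNeg M 1⟩⟩⟩
  exact ⟨Set.Subset.antisymm hsub2 hsub1, part2, part3⟩
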